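/- Let n ≥ 1 be an integer, c ∈ ℝ, and let f₂ : ℂ → ℂ satisfy f₂(conj z) = conj(f₂(z)) for all z ∈ ℂ. Define R : ℂ² → ℂ² by R₁(ζ₁,ζ₂) = ζ₁ + i f₂(c ζ₁ⁿ + ζ₂) and R₂(ζ₁,ζ₂) = ζ₂ + c ζ₁ⁿ − c (ζ₁ + i f₂(c ζ₁ⁿ + ζ₂))ⁿ. Then R satisfies the reality constraint R( conj( R( conj ζ₁, conj ζ₂ ) ) ) = (ζ₁, ζ₂) for all (ζ₁,ζ₂) ∈ ℂ², where conj acts componentwise. -/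
import Mathlib


/-- if `f₂` is a real function (`f₂(z̄) = f₂(z)̄`), `n ≥ 1` and
`c ∈ ℝ`, then the Example 2 Riemann–Hilbert data
`R(ζ₁,ζ₂) = (ζ₁ + i f₂(cζ₁ⁿ + ζ₂), ζ₂ + cζ₁ⁿ − c(ζ₁ + i f₂(cζ₁ⁿ + ζ₂))ⁿ)`
satisfies the reality constraint `R(conj(R(conj ζ))) = ζ`. -/
theorem example2_reality_constraint
    (n : ℕ) (hn : 1 ≤ n) (c : ℝ)
    (f₂ : ℂ → ℂ) (hf₂ : ∀ z : ℂ, f₂ (starRingEnd ℂ z) = starRingEnd ℂ (f₂ z))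
    (R : ℂ × ℂ → ℂ × ℂ)
    (hR : ∀ ζ : ℂ × ℂ,
      R ζ = (ζ.1 + Complex.I * f₂ ((c : ℂ) * ζ.1 ^ n + ζ.2),
             ζ.2 + (c : ℂ) * ζ.1 ^ n
               - (c : ℂ) * (ζ.1 + Complex.I * f₂ ((c : ℂ) * ζ.1 ^ n + ζ.2)) ^ n)) :
    ∀ ζ₁ ζ₂ : ℂ,
      R (starRingEnd ℂ (R (starRingEnd ℂ ζ₁, starRingEnd ℂ ζ₂)).1,
         starRingEnd ℂ (R (starRingEnd ℂ ζ₁, starRingEnd ℂ ζ₂)).2) = (ζ₁, ζ₂) := by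
  intro ζ₁ ζ₂
  have key : ∀ z : ℂ, (c : ℂ) * (starRingEnd ℂ z) ^ n = starRingEnd ℂ ((c : ℂ) * z ^ n) := by
    intro z; simp [map_mul, map_pow, Complex.conj_ofReal]
  simp only [hR]
  set w := (c : ℂ) * ζ₁ ^ n + ζ₂ with hw
  have h1 : (c : ℂ) * (starRingEnd ℂ ζ₁) ^ n + starRingEnd ℂ ζ₂ = starRingEnd ℂ w := by
    simp [hw, map_add, map_mul, map_pow, Complex.conj_ofReal]
  rw [h1, hf₂]
  set F := f₂ w with hF
  set a := ζ₁ - Complex.I * F with ha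
  have e1 : starRingEnd ℂ (starRingEnd ℂ ζ₁ + Complex.I * starRingEnd ℂ F) = a := by
    simp [ha, Complex.conj_I]; ring
  have e2 : starRingEnd ℂ (starRingEnd ℂ ζ₂ + (c : ℂ) * (starRingEnd ℂ ζ₁) ^ n
      - (c : ℂ) * (starRingEnd ℂ ζ₁ + Complex.I * starRingEnd ℂ F) ^ n)
      = ζ₂ + (c : ℂ) * ζ₁ ^ n - (c : ℂ) * a ^ n := by
    simp only [map_sub, map_add, map_mul, map_pow, Complex.conj_conj, Complex.conj_ofReal,
      Complex.conj_I, ha]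
    ring
  rw [e1, e2]
  have h2 : (c : ℂ) * a ^ n + (ζ₂ + (c : ℂ) * ζ₁ ^ n - (c : ℂ) * a ^ n) = w := by
    rw [hw]; ring
  simp only [h2, ← hF]
  have h3 : a + Complex.I * F = ζ₁ := by rw [ha]; ring
  rw [h3, Prod.mk.injEq]
  exact ⟨rfl, by ring⟩
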